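/- For every real number α, the circle rotation R_α : S¹ → S¹, given by R_α(x) = x + α on the circle ℝ/ℤ, is not μ-topologically stable for any Borel probability measure μ on S¹. -/

import Mathlib

open MeasureTheory

/-- `f` is `μ`-topologically stable. -/
def MuTopStable {X : Type*} [MetricSpace X] [MeasurableSpace X]
    (μ : Measure X) (f : X → X) : Prop :=
  ∀ ε > 0, ∃ δ > 0, ∀ g : X → X, Continuous g →
    (∀ x, dist (f x) (g x) ≤ δ) →
    ∃ (Y : Set X) (hg : Set.MapsTo g Y Y), IsCompact Y ∧
      μ Yᶜ ≤ ENNReal.ofReal ε ∧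
      ∃ h : Y → X, Continuous h ∧ (∀ y : Y, dist (h y) (y : X) ≤ ε) ∧
        ∀ y : Y, f (h y) = h ⟨g y, hg y.2⟩

/-- No circle rotation `R_α : x ↦ x + α` on `S¹ = ℝ/ℤ` is `μ`-topologically stable for
any Borel probability measure `μ` on `S¹`. -/
theorem rotation_not_muTopStable
    (α : ℝ) (μ : Measure UnitAddCircle) [IsProbabilityMeasure μ] :
    ¬ MuTopStable μ (fun x : UnitAddCircle => x + (α : UnitAddCircle)) := by
  intro hstab
  obtain ⟨δ, hδ, H⟩ := hstab (1/16) (by norm_num)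
  set t : ℝ := min δ (1/4) with htdef
  have ht0 : 0 < t := lt_min hδ (by norm_num)
  have ht4 : t ≤ 1/4 := min_le_right _ _
  have htδ : t ≤ δ := min_le_left _ _
  set β : ℝ := α - t with hβdef
  have hnorm_t : ∀ n : ℕ, (1:ℝ)/4 ≤ n * t → n * t ≤ 1/2 → (1:ℝ)/4 ≤ ‖((n * t : ℝ) : UnitAddCircle)‖ := by
    intro n h1 h2
    rw [UnitAddCircle.norm_eq]
    rcases le_or_gt ((round ((n:ℝ)*t) : ℝ)) 0 with hr | hr
    · rw [abs_of_nonneg (by linarith)]; linarith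
    · have : (1:ℝ) ≤ round ((n:ℝ)*t) := by exact_mod_cast hr
      rw [abs_of_nonpos (by linarith)]; linarith
  obtain ⟨Y, hg, hYcomp, hμY, h, hcont, hdist, hsemi⟩ :=
    H (fun x => x + (β : UnitAddCircle)) (by continuity) (by
      intro x
      have : dist ((α : UnitAddCircle)) ((β : UnitAddCircle)) ≤ δ := by
        rw [dist_eq_norm, ← AddCircle.coe_sub]
        have : α - β = t := by rw [hβdef]; ring
        rw [this]
        calc ‖((t:ℝ) : UnitAddCircle)‖ ≤ |t| := by
              simpa [Real.norm_eq_abs] using QuotientAddGroup.norm_mk_le_norm (S := AddSubgroup.zmultiples (1:ℝ)) (m := t)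
          _ ≤ δ := by rw [abs_of_pos ht0]; exact htδ
      simpa [dist_add_left] using this)
  -- Y is nonempty
  have hYne : Y.Nonempty := by
    by_contra hne
    rw [Set.not_nonempty_iff_eq_empty] at hne
    subst hne
    simp only [Set.compl_empty] at hμY
    have h1 : μ Set.univ = 1 := measure_univ
    rw [h1] at hμY
    have : ENNReal.ofReal (1/16) < 1 := by
      rw [ENNReal.ofReal_lt_one]; norm_num
    exact absurd (lt_of_le_of_lt hμY this) (lt_irrefl _)
  obtain ⟨y₀, hy₀⟩ := hYne
  -- the g-orbit of y₀ inside Y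
  let Z : ℕ → Y := fun n => Nat.rec ⟨y₀, hy₀⟩ (fun _ z => ⟨z.1 + (β : UnitAddCircle), hg z.2⟩) n
  have hZcoe : ∀ n : ℕ, (Z n).1 = y₀ + n • ((β : UnitAddCircle)) := by
    intro n
    induction n with
    | zero => simp [Z]
    | succ n ih =>
      show (Z n).1 + (β : UnitAddCircle) = _
      rw [ih, succ_nsmul, add_assoc]
  have hhZ : ∀ n : ℕ, h (Z n) = h (Z 0) + n • ((α : UnitAddCircle)) := by
    intro n
    induction n with
    | zero => simp
    | succ n ih =>
      have := (hsemi (Z n)).symm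
      show h ⟨(Z n).1 + (β : UnitAddCircle), hg (Z n).2⟩ = _
      rw [this]
      show h (Z n) + (α : UnitAddCircle) = _
      rw [ih, succ_nsmul, add_assoc]
  -- key bound
  have key : ∀ n : ℕ, ‖((n * t : ℝ) : UnitAddCircle)‖ ≤ 1/8 := by
    intro n
    have h1 : dist (h (Z n)) ((Z n).1) ≤ 1/16 := hdist (Z n)
    have h0 : dist (h (Z 0)) ((Z 0).1) ≤ 1/16 := hdist (Z 0)
    have hZ0 : (Z 0).1 = y₀ := rfl
    rw [hZ0] at h0
    rw [hhZ n, hZcoe n] at h1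
    have htri : dist (h (Z 0) + n • ((α : UnitAddCircle))) (h (Z 0) + n • ((β : UnitAddCircle)))
        ≤ 1/8 := by
      calc dist (h (Z 0) + n • ((α : UnitAddCircle))) (h (Z 0) + n • ((β : UnitAddCircle)))
          ≤ dist (h (Z 0) + n • ((α : UnitAddCircle))) (y₀ + n • ((β : UnitAddCircle)))
            + dist (y₀ + n • ((β : UnitAddCircle))) (h (Z 0) + n • ((β : UnitAddCircle))) :=
            dist_triangle _ _ _
        _ ≤ 1/16 + 1/16 := by
            refine add_le_add h1 ?_
            rw [dist_add_right, dist_comm]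
            exact h0
        _ = 1/8 := by norm_num
    rw [dist_add_left, dist_eq_norm, ← smul_sub, ← AddCircle.coe_sub] at htri
    have hab : α - β = t := by rw [hβdef]; ring
    rw [hab, ← AddCircle.coe_nsmul, nsmul_eq_mul] at htri
    exact_mod_cast htri
  -- choose n with n*t in [1/4, 1/2]
  set n : ℕ := ⌈(1/4) / t⌉₊ with hn
  have hn1 : (1:ℝ)/4 ≤ n * t := by
    have := Nat.le_ceil ((1/4) / t)
    calc (1:ℝ)/4 = ((1/4)/t) * t := by field_simp
      _ ≤ n * t := by
          exact mul_le_mul_of_nonneg_right this ht0.le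
  have hn2 : (n:ℝ) * t ≤ 1/2 := by
    have hlt : (n:ℝ) < (1/4)/t + 1 := Nat.ceil_lt_add_one (by positivity)
    have : (n:ℝ) * t < ((1/4)/t + 1) * t := by
      exact mul_lt_mul_of_pos_right hlt ht0
    have heq : ((1/4)/t + 1) * t = 1/4 + t := by field_simp
    nlinarith
  have := hnorm_t n hn1 hn2
  have := key n
  linarith
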